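/- Let n ≥ 3 and 1 ≤ d ≤ n − 2, and let Λ be an arbitrary real diagonal n×n matrix. Then there exist traceless real diagonal n×n matrices X₁, …, X_d, orthonormal with respect to the Frobenius inner product, such that all n diagonal entries of the matrix D + Λ are pairwise distinct, where D := 1 + n·∑ᵢ Xᵢ² is the degree matrix of the operator system span(1, X₁, …, X_d). -/

import Mathlib

open Matrix Module

private noncomputable def Wfun (n : ℕ) : ℕ → ℝ := fun j =>
  if j = 0 then 0 else if j = n - 1 then -(((n:ℝ)-1)*((n:ℝ)-2)/2) else (j:ℝ)

private noncomputable def Ufun (n : ℕ) : ℕ → ℝ := fun j => if j = 0 then (n:ℝ)-1 else -1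

private lemma Usum (n : ℕ) (hn : 3 ≤ n) : ∑ k : Fin n, Ufun n k.1 = 0 := by
  have h : ∀ k : Fin n, Ufun n k.1 = (if k = (⟨0, by omega⟩ : Fin n) then (n:ℝ) else 0) - 1 := by
    intro k
    rcases eq_or_ne k.1 0 with h | h
    · rw [if_pos (Fin.ext h)]; simp [Ufun, h]
    · rw [if_neg (fun hk => h (by rw [hk]))]; simp [Ufun, h]
  rw [Finset.sum_congr rfl (fun k _ => h k), Finset.sum_sub_distrib,
    Finset.sum_ite_eq' Finset.univ _ (fun _ => (n:ℝ))]
  simp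

private lemma Wfun_le (n : ℕ) (hn : 3 ≤ n) (j : ℕ) (hj : j ≤ n - 2) : Wfun n j = (j : ℝ) := by
  unfold Wfun
  split_ifs with h1 h2
  · simp [h1]
  · omega
  · rfl

private lemma Wfun_last (n : ℕ) (hn : 3 ≤ n) :
    Wfun n (n - 1) = -(((n:ℝ)-1)*((n:ℝ)-2)/2) := by
  unfold Wfun
  rw [if_neg (by omega), if_pos rfl]

private lemma Wfun_last_neg (n : ℕ) (hn : 3 ≤ n) : Wfun n (n - 1) < 0 := by
  rw [Wfun_last n hn]
  have h1 : (1:ℝ) ≤ (n:ℝ) - 2 := by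
    have : (3:ℝ) ≤ (n:ℝ) := by exact_mod_cast hn
    linarith
  nlinarith

private lemma Wsum (n : ℕ) (hn : 3 ≤ n) : ∑ k : Fin n, Wfun n k.1 = 0 := by
  obtain ⟨m, rfl⟩ : ∃ m, n = m + 3 := ⟨n - 3, by omega⟩
  rw [Fin.sum_univ_eq_sum_range (fun j => Wfun (m+3) j) (m+3)]
  rw [Finset.sum_range_succ]
  have h1 : ∀ j ∈ Finset.range (m+2), Wfun (m+3) j = (j : ℝ) :=
    fun j hj => Wfun_le (m+3) hn j (by simpa using Nat.lt_succ_iff.mp (Finset.mem_range.mp hj))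
  rw [Finset.sum_congr rfl h1]
  have h2 : (∑ j ∈ Finset.range (m+2), (j:ℝ)) * 2 = (m+2) * (m+1) := by
    have := Finset.sum_range_id_mul_two (m+2)
    have h := congrArg (Nat.cast : ℕ → ℝ) this
    push_cast at h
    linarith
  have h3 : Wfun (m+3) (m+2) = -(((m:ℝ)+2)*((m:ℝ)+1)/2) := by
    have := Wfun_last (m+3) hn
    norm_num at this ⊢
    rw [this]; ring
  rw [h3]
  linarith

private lemma UWprod (n : ℕ) (j : ℕ) : Ufun n j * Wfun n j = - Wfun n j := by
  unfold Ufun Wfun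
  rcases eq_or_ne j 0 with h | h <;> simp [h] <;> split_ifs <;> ring

private lemma Winj (n : ℕ) (hn : 3 ≤ n) (j1 j2 : ℕ) (h1 : j1 < n) (h2 : j2 < n)
    (hne : j1 ≠ j2) : Wfun n j1 ≠ Wfun n j2 := by
  by_cases e1 : j1 = n - 1 <;> by_cases e2 : j2 = n - 1
  · omega
  · rw [e1, Wfun_le n hn j2 (by omega)]
    have : (0:ℝ) ≤ j2 := Nat.cast_nonneg j2
    intro h; linarith [Wfun_last_neg n hn]
  · rw [e2, Wfun_le n hn j1 (by omega)]
    have : (0:ℝ) ≤ j1 := Nat.cast_nonneg j1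
    intro h; linarith [Wfun_last_neg n hn]
  · rw [Wfun_le n hn j1 (by omega), Wfun_le n hn j2 (by omega)]
    exact_mod_cast hne

private lemma exists_orthonormal_perp (n : ℕ) (e1 u w : EuclideanSpace ℝ (Fin n)) (d' : ℕ)
    (hd : d' ≤ n - 3) :
    ∃ y : Fin d' → (Fin n → ℝ),
      (∀ i j, (∑ k, y i k * y j k) = if i = j then (1:ℝ) else 0) ∧
      (∀ i, ∑ k, e1 k * y i k = 0) ∧ (∀ i, ∑ k, u k * y i k = 0) ∧
      (∀ i, ∑ k, w k * y i k = 0) := by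
  classical
  set K : Submodule ℝ (EuclideanSpace ℝ (Fin n)) := Submodule.span ℝ (Set.range ![e1, u, w])
    with hK
  have hrankK : finrank ℝ K ≤ 3 := by
    have h := finrank_span_le_card (R := ℝ) (Set.range ![e1, u, w])
    refine h.trans ?_
    rw [Set.toFinset_range]
    exact Finset.card_image_le.trans (by simp)
  have hrankS : d' ≤ finrank ℝ Kᗮ := by
    have h := Submodule.finrank_add_finrank_orthogonal (K := K)
    have hE : finrank ℝ (EuclideanSpace ℝ (Fin n)) = n := finrank_euclideanSpace_fin
    omega
  set B := stdOrthonormalBasis ℝ (Kᗮ : Submodule ℝ (EuclideanSpace ℝ (Fin n))) with hB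
  set y : Fin d' → (Fin n → ℝ) :=
    fun i => ((B (Fin.castLE hrankS i) : EuclideanSpace ℝ (Fin n)) : Fin n → ℝ) with hy
  have hymem : ∀ i, (WithLp.toLp 2 (y i) : EuclideanSpace ℝ (Fin n)) ∈ Kᗮ :=
    fun i => (B (Fin.castLE hrankS i)).2
  have hinner : ∀ (a b : EuclideanSpace ℝ (Fin n)), inner (𝕜 := ℝ) a b = ∑ k, a k * b k := by
    intro a b; simp [PiLp.inner_apply, RCLike.inner_apply]
    exact Finset.sum_congr rfl fun _ _ => mul_comm _ _
  have hperp : ∀ i, ∀ v ∈ K, ∑ k, v k * y i k = 0 := by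
    intro i v hv
    rw [show ∑ k, v k * y i k = inner (𝕜 := ℝ) v (WithLp.toLp 2 (y i)) from (hinner v _).symm]
    exact (Submodule.mem_orthogonal K _).mp (hymem i) v hv
  refine ⟨y, ?_, ?_, ?_, ?_⟩
  · intro i j
    have h := B.orthonormal
    rw [orthonormal_iff_ite] at h
    have h2 := h (Fin.castLE hrankS i) (Fin.castLE hrankS j)
    rw [Submodule.coe_inner, hinner] at h2
    simp only [hy]
    rw [h2]
    simp [Fin.castLE_inj]
  · exact fun i => hperp i e1 (Submodule.subset_span ⟨0, rfl⟩)
  · exact fun i => hperp i u (Submodule.subset_span ⟨1, rfl⟩)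
  · exact fun i => hperp i w (Submodule.subset_span ⟨2, rfl⟩)

private lemma coeff_one_quad (a b c : ℝ) :
    (Polynomial.C a * Polynomial.X^2 + Polynomial.C b * Polynomial.X + Polynomial.C c).coeff 1
      = b := by
  simp [Polynomial.coeff_add, Polynomial.coeff_C_mul, Polynomial.coeff_X_pow,
    Polynomial.coeff_C, Polynomial.coeff_X_one]

private lemma trace_diag_mul (n : ℕ) (a b : Fin n → ℝ) :
    ((Matrix.diagonal a)ᵀ * Matrix.diagonal b).trace = ∑ k, a k * b k := by
  simp [Matrix.diagonal_transpose, Matrix.diagonal_mul_diagonal, Matrix.trace_diagonal]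

/-- For `1 ≤ d ≤ n - 2` and any real diagonal matrix `Λ`, there are traceless,
Frobenius-orthonormal real diagonal matrices `X₁, …, X_d` such that the diagonal matrix
`D + Λ`, where `D = 1 + n ∑ᵢ Xᵢ²` is the degree matrix of `span (1, X₁, …, X_d)`, has
pairwise distinct diagonal entries. -/
theorem exists_diagonal_tuple_simple_degree_matrix
    (n d : ℕ) (hn : 3 ≤ n) (hd₁ : 1 ≤ d) (hd₂ : d ≤ n - 2) (Λ : Fin n → ℝ) :
    ∃ x : Fin d → (Fin n → ℝ),
      (∀ i, (Matrix.diagonal (x i)).trace = 0) ∧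
      (∀ i j, ((Matrix.diagonal (x i))ᵀ * Matrix.diagonal (x j)).trace
        = if i = j then 1 else 0) ∧
      Function.Injective (fun k : Fin n =>
        (((1 : Matrix (Fin n) (Fin n) ℝ) + (n : ℝ) • ∑ i, (Matrix.diagonal (x i)) ^ 2)
          + Matrix.diagonal Λ) k k) := by
  classical
  obtain ⟨d', rfl⟩ : ∃ e, d = e + 1 := ⟨d - 1, by omega⟩
  have hnR : (3:ℝ) ≤ (n:ℝ) := by exact_mod_cast hn
  -- the two special vectors
  set u : Fin n → ℝ := fun k => Ufun n k.1 with hu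
  set w : Fin n → ℝ := fun k => Wfun n k.1 with hw
  have hUsum : ∑ k, u k = 0 := Usum n hn
  have hWsum : ∑ k, w k = 0 := Wsum n hn
  have huwval : ∀ k : Fin n, u k * w k = - w k := fun k => UWprod n k.1
  have hUWsum : ∑ k, u k * w k = 0 := by
    rw [Finset.sum_congr rfl (fun k _ => huwval k)]
    simp [hWsum]
  have hUUpos : 0 < ∑ k, u k * u k := by
    have h0 : ∀ k ∈ Finset.univ, (0:ℝ) ≤ u k * u k := fun k _ => mul_self_nonneg _
    have h1 := Finset.single_le_sum h0 (Finset.mem_univ (⟨0, by omega⟩ : Fin n))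
    have h2 : u (⟨0, by omega⟩ : Fin n) = (n:ℝ) - 1 := by simp [hu, Ufun]
    rw [h2] at h1
    nlinarith
  have hWWpos : 0 < ∑ k, w k * w k := by
    have h0 : ∀ k ∈ Finset.univ, (0:ℝ) ≤ w k * w k := fun k _ => mul_self_nonneg _
    have h1 := Finset.single_le_sum h0 (Finset.mem_univ (⟨1, by omega⟩ : Fin n))
    have h2 : w (⟨1, by omega⟩ : Fin n) = 1 := by
      rw [hw]
      have := Wfun_le n hn 1 (by omega)
      simpa using this
    rw [h2] at h1
    nlinarith
  -- orthonormal completion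
  obtain ⟨y, hyon, hy1, hyu, hyw⟩ :=
    exists_orthonormal_perp n (WithLp.toLp 2 (fun _ => (1:ℝ))) (WithLp.toLp 2 u) (WithLp.toLp 2 w) d' (by omega)
  simp only [WithLp.ofLp_toLp] at hyu hyw
  have hy1' : ∀ i, ∑ k, y i k = 0 := fun i => by simpa using hy1 i
  -- the polynomials
  set P : Fin n → Fin n → Polynomial ℝ := fun k l =>
    Polynomial.C ((n:ℝ)*(w k * w k - w l * w l)
        + ((n:ℝ) * ((∑ i, y i k * y i k) - (∑ i, y i l * y i l)) + (Λ k - Λ l))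
          * (∑ k', w k' * w k')) * Polynomial.X^2
    + Polynomial.C (2*(n:ℝ)*(u k * w k - u l * w l)) * Polynomial.X
    + Polynomial.C ((n:ℝ)*(u k * u k - u l * u l)
        + ((n:ℝ) * ((∑ i, y i k * y i k) - (∑ i, y i l * y i l)) + (Λ k - Λ l))
          * (∑ k', u k' * u k')) with hP
  have hPne : ∀ k l : Fin n, k ≠ l → P k l ≠ 0 := by
    intro k l hkl h0
    have hc : (P k l).coeff 1 = 2*(n:ℝ)*(u k * w k - u l * w l) := coeff_one_quad _ _ _
    rw [h0, Polynomial.coeff_zero] at hc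
    have hww : w k ≠ w l := Winj n hn k.1 l.1 k.2 l.2 (fun h => hkl (Fin.ext h))
    rw [huwval k, huwval l] at hc
    have hn0 : (n:ℝ) ≠ 0 := by positivity
    apply hww
    have h3 : 2*(n:ℝ) * (w l - w k) = 0 := by linarith [hc]
    rcases mul_eq_zero.mp h3 with h4 | h4
    · exfalso; linarith
    · linarith
  -- choose t avoiding all roots
  set Bad : Set ℝ :=
    ⋃ (k : Fin n) (l : Fin n), (if k = l then (∅ : Set ℝ) else {x | (P k l).IsRoot x}) with hBad
  have hBadfin : Bad.Finite := by
    refine Set.finite_iUnion fun k => Set.finite_iUnion fun l => ?_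
    split_ifs with h
    · exact Set.finite_empty
    · exact Polynomial.finite_setOf_isRoot (hPne k l h)
  obtain ⟨t, ht⟩ := hBadfin.infinite_compl.nonempty
  have hProot : ∀ k l : Fin n, k ≠ l → (P k l).eval t ≠ 0 := by
    intro k l hkl h
    apply ht
    refine Set.mem_iUnion.mpr ⟨k, Set.mem_iUnion.mpr ⟨l, ?_⟩⟩
    rw [if_neg hkl]
    exact h
  -- the first vector
  have hc2pos : 0 < (∑ k, u k * u k) + t^2 * (∑ k, w k * w k) := by nlinarith [sq_nonneg t]
  have hc2ne : (∑ k, u k * u k) + t^2 * (∑ k, w k * w k) ≠ 0 := hc2pos.ne'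
  set s : ℝ := Real.sqrt ((∑ k, u k * u k) + t^2 * (∑ k, w k * w k)) with hs
  have hs2 : s * s = (∑ k, u k * u k) + t^2 * (∑ k, w k * w k) :=
    Real.mul_self_sqrt hc2pos.le
  have hs0 : s ≠ 0 := by
    intro h; rw [h] at hs2; simp at hs2; linarith
  set x1 : Fin n → ℝ := fun k => (u k + t * w k) / s with hx1
  set x : Fin (d'+1) → Fin n → ℝ := Fin.cons x1 y with hx
  have hx1y : ∀ j, ∑ k, x1 k * y j k = 0 := by
    intro j
    have h : ∀ k, x1 k * y j k = (u k * y j k + t * (w k * y j k)) / s := by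
      intro k; rw [hx1]; ring
    rw [Finset.sum_congr rfl fun k _ => h k, ← Finset.sum_div, Finset.sum_add_distrib,
      ← Finset.mul_sum, hyu j, hyw j]
    simp
  have hx1sq : ∀ q, x1 q * x1 q
      = (u q + t * w q) * (u q + t * w q) / ((∑ k, u k * u k) + t^2 * (∑ k, w k * w k)) := by
    intro q
    rw [hx1]
    rw [div_mul_div_comm, hs2]
  have hx1x1 : ∑ k, x1 k * x1 k = 1 := by
    have h : ∀ k, x1 k * x1 k = (u k * u k + 2*t*(u k * w k) + t^2*(w k * w k))
        / ((∑ k', u k' * u k') + t^2 * (∑ k', w k' * w k')) := by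
      intro k
      rw [hx1sq k]
      congr 1
      ring
    rw [Finset.sum_congr rfl fun k _ => h k, ← Finset.sum_div, Finset.sum_add_distrib,
      Finset.sum_add_distrib, ← Finset.mul_sum, ← Finset.mul_sum, hUWsum]
    rw [mul_zero, add_zero]
    exact div_self hc2ne
  refine ⟨x, ?_, ?_, ?_⟩
  · -- traceless
    intro i
    rw [Matrix.trace_diagonal]
    induction i using Fin.cases with
    | zero =>
        simp only [hx, Fin.cons_zero]
        simp only [hx1]
        rw [← Finset.sum_div, Finset.sum_add_distrib, ← Finset.mul_sum, hUsum, hWsum]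
        simp
    | succ i =>
        simp only [hx, Fin.cons_succ]
        exact hy1' i
  · -- orthonormal
    intro i j
    rw [trace_diag_mul]
    induction i using Fin.cases with
    | zero =>
        induction j using Fin.cases with
        | zero =>
            simp only [hx, Fin.cons_zero, if_pos rfl]
            exact hx1x1
        | succ j =>
            simp only [hx, Fin.cons_zero, Fin.cons_succ]
            rw [if_neg (Ne.symm (Fin.succ_ne_zero j))]
            exact hx1y j
    | succ i =>
        induction j using Fin.cases with
        | zero =>
            simp only [hx, Fin.cons_zero, Fin.cons_succ]
            rw [if_neg (Fin.succ_ne_zero i)]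
            rw [Finset.sum_congr rfl fun k _ => mul_comm (y i k) (x1 k)]
            exact hx1y i
        | succ j =>
            simp only [hx, Fin.cons_succ, Fin.succ_inj]
            exact hyon i j
  · -- injective
    intro k l hkl
    by_contra hne
    simp only at hkl
    have hmat : ∀ q : Fin n,
        (((1 : Matrix (Fin n) (Fin n) ℝ) + (n : ℝ) • ∑ i, (Matrix.diagonal (x i)) ^ 2)
          + Matrix.diagonal Λ) q q
        = 1 + (n:ℝ) * (x1 q * x1 q + ∑ i, y i q * y i q) + Λ q := by
      intro q
      have hsq : ∀ i : Fin (d'+1),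
          (Matrix.diagonal (x i))^2 = Matrix.diagonal (fun k' => x i k' * x i k') := by
        intro i; rw [sq, Matrix.diagonal_mul_diagonal]
      rw [Finset.sum_congr rfl fun i _ => hsq i]
      simp only [Matrix.add_apply, Matrix.smul_apply, Matrix.one_apply_eq,
        Matrix.diagonal_apply_eq, Matrix.sum_apply, smul_eq_mul]
      rw [Fin.sum_univ_succ]
      simp only [hx, Fin.cons_zero, Fin.cons_succ]
    rw [hmat k, hmat l] at hkl
    have hA : ∀ q, x1 q * x1 q * ((∑ k', u k' * u k') + t^2 * (∑ k', w k' * w k'))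
        = (u q + t * w q) * (u q + t * w q) := by
      intro q
      rw [hx1sq q]
      exact div_mul_cancel₀ _ hc2ne
    have h1 : (1 + (n:ℝ) * (x1 k * x1 k + ∑ i, y i k * y i k) + Λ k)
          * ((∑ k', u k' * u k') + t^2 * (∑ k', w k' * w k'))
        = (1 + (n:ℝ) * (x1 l * x1 l + ∑ i, y i l * y i l) + Λ l)
          * ((∑ k', u k' * u k') + t^2 * (∑ k', w k' * w k')) := by
      rw [hkl]
    have hPt : (P k l).eval t = 0 := by
      simp only [hP, Polynomial.eval_add, Polynomial.eval_mul, Polynomial.eval_pow,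
        Polynomial.eval_C, Polynomial.eval_X]
      linear_combination h1 - (n:ℝ) * hA k + (n:ℝ) * hA l
    exact hProot k l hne hPt
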